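/- Let (V, ω) be a 2m-dimensional symplectic vector space and θ another symplectic form on V such that A := (ω♭)^{-1}θ♭ satisfies A² = id and A is split. Set Q(u + σ) = −(θ♭)^{-1}σ + θ♭u on E = V ⊕ V*. Then β_Q(x, y) := b(I₋Qx, y) is symmetric and split, i.e., has signature (2m, 2m). -/

import Mathlib

open Module

lemma toDual_self_pos {V : Type*} [AddCommGroup V] [Module ℝ V] [FiniteDimensional ℝ V]
    {ι : Type*} [Fintype ι] [DecidableEq ι] (e : Basis ι ℝ V) {w : V} (hw : w ≠ 0) :
    0 < e.toDual w w := by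
  have h1 : e.toDual w w = ∑ i, e.repr w i * e.repr w i := by
    nth_rewrite 1 [← e.sum_repr w]
    rw [map_sum, LinearMap.sum_apply]
    simp [Basis.toDual_apply_right]
  rw [h1]
  obtain ⟨i, hi⟩ : ∃ i, e.repr w i ≠ 0 := by
    by_contra h
    push_neg at h
    apply hw
    have : e.repr w = 0 := by ext i; exact h i
    simpa using congrArg e.repr.symm this
  apply Finset.sum_pos' (fun j _ => mul_self_nonneg _)
  exact ⟨i, Finset.mem_univ i, mul_self_pos.mpr hi⟩

lemma graph_finrank {V W : Type*} [AddCommGroup V] [Module ℝ V] [FiniteDimensional ℝ V]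
    [AddCommGroup W] [Module ℝ W] (f : V →ₗ[ℝ] W) :
    Module.finrank ℝ (LinearMap.range ((LinearMap.id : V →ₗ[ℝ] V).prod f)) =
      Module.finrank ℝ V := by
  apply LinearMap.finrank_range_of_inj
  intro x y h
  simpa using congrArg Prod.fst h

/-- A real bilinear form `β` on `E` has signature `(p, q)`. -/
def HasSignature {E : Type*} [AddCommGroup E] [Module ℝ E]
    (β : E → E → ℝ) (p q : ℕ) : Prop :=
  ((∃ P : Submodule ℝ E, Module.finrank ℝ P = p ∧ ∀ x ∈ P, x ≠ 0 → 0 < β x x) ∧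
    ∀ P : Submodule ℝ E, (∀ x ∈ P, x ≠ 0 → 0 < β x x) → Module.finrank ℝ P ≤ p) ∧
  ((∃ N : Submodule ℝ E, Module.finrank ℝ N = q ∧ ∀ x ∈ N, x ≠ 0 → β x x < 0) ∧
    ∀ N : Submodule ℝ E, (∀ x ∈ N, x ≠ 0 → β x x < 0) → Module.finrank ℝ N ≤ q)

theorem stmt17 (V : Type*) [AddCommGroup V] [Module ℝ V] [FiniteDimensional ℝ V]
    (m : ℕ) (hdim : Module.finrank ℝ V = 2 * m)
    (ωb θb : V →ₗ[ℝ] Module.Dual ℝ V)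
    (hωskew : ∀ u v, ωb u v = - ωb v u)
    (hθskew : ∀ u v, θb u v = - θb v u)
    (p : Module.Dual ℝ V →ₗ[ℝ] V)
    (hp1 : ∀ σ, ωb (p σ) = σ) (hp2 : ∀ u, p (ωb u) = u)
    (pθ : Module.Dual ℝ V →ₗ[ℝ] V)
    (hpθ1 : ∀ σ, θb (pθ σ) = σ) (hpθ2 : ∀ u, pθ (θb u) = u)
    (A : Module.End ℝ V)
    (hA : ∀ v, ωb (A v) = θb v)
    (hA2 : ∀ v, A (A v) = v)
    (hAsplit : Module.finrank ℝ (A.eigenspace 1) = Module.finrank ℝ (A.eigenspace (-1)))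
    (b : (V × Module.Dual ℝ V) → (V × Module.Dual ℝ V) → ℝ)
    (hb : ∀ x y, b x y = y.2 x.1 + x.2 y.1)
    (I : (V × Module.Dual ℝ V) → (V × Module.Dual ℝ V))
    (hI : ∀ x, I x = (-(p x.2), ωb x.1))
    (Q : (V × Module.Dual ℝ V) → (V × Module.Dual ℝ V))
    (hQ : ∀ x, Q x = (-(pθ x.2), θb x.1))
    (β : (V × Module.Dual ℝ V) → (V × Module.Dual ℝ V) → ℝ)
    (hβ : ∀ x y, β x y = b (I (Q x)) y) :
    (∀ x y, β x y = β y x) ∧ HasSignature β (2 * m) (2 * m) := by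
  have hip : ∀ (σ : Module.Dual ℝ V) (v : V), ωb (pθ σ) v = σ (A v) := by
    intro σ v
    have h1 : ωb (pθ σ) v = -(ωb v (pθ σ)) := hωskew _ _
    have h2 : ωb v = θb (A v) := by rw [← hA (A v), hA2]
    rw [h1, h2, hθskew (A v) (pθ σ), hpθ1]
    ring
  have hform : ∀ x y, β x y = -(y.2 (A x.1)) - x.2 (A y.1) := by
    intro x y
    have h1 : p (θb x.1) = A x.1 := by rw [← hA, hp2]
    rw [hβ, hQ, hI]
    simp only [hb, map_neg, LinearMap.neg_apply]
    rw [h1, hip x.2 y.1]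
    ring
  have hsymm : ∀ x y, β x y = β y x := by
    intro x y; rw [hform, hform]; ring
  have hdiag : ∀ x, β x x = -(2 * x.2 (A x.1)) := by
    intro x; rw [hform]; ring
  have hAinj : ∀ u : V, A u = 0 → u = 0 := by
    intro u h
    have := hA2 u
    rw [h, map_zero] at this
    exact this.symm
  set e := Module.finBasis ℝ V with he
  set g := e.toDual with hg
  set LP : V →ₗ[ℝ] V × Module.Dual ℝ V :=
    (LinearMap.id : V →ₗ[ℝ] V).prod (-(g ∘ₗ (A : V →ₗ[ℝ] V))) with hLP
  set LN : V →ₗ[ℝ] V × Module.Dual ℝ V :=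
    (LinearMap.id : V →ₗ[ℝ] V).prod (g ∘ₗ (A : V →ₗ[ℝ] V)) with hLN
  have hPpos : ∀ x ∈ LinearMap.range LP, x ≠ 0 → 0 < β x x := by
    rintro x ⟨u, rfl⟩ hx
    have hu : u ≠ 0 := by
      rintro rfl
      exact hx (by simp [hLP])
    have hAu : A u ≠ 0 := fun h => hu (hAinj u h)
    have : β (LP u) (LP u) = 2 * g (A u) (A u) := by
      rw [hdiag]
      simp only [hLP, LinearMap.prod_apply, LinearMap.id_coe, id_eq, Function.prod_apply,
        LinearMap.neg_apply, LinearMap.comp_apply]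
      ring
    rw [this]
    have := toDual_self_pos e hAu
    rw [← hg] at this
    linarith
  have hNneg : ∀ x ∈ LinearMap.range LN, x ≠ 0 → β x x < 0 := by
    rintro x ⟨u, rfl⟩ hx
    have hu : u ≠ 0 := by
      rintro rfl
      exact hx (by simp [hLN])
    have hAu : A u ≠ 0 := fun h => hu (hAinj u h)
    have : β (LN u) (LN u) = -(2 * g (A u) (A u)) := by
      rw [hdiag]
      simp only [hLN, LinearMap.prod_apply, LinearMap.id_coe, id_eq, Function.prod_apply,
        LinearMap.comp_apply]
    rw [this]
    have := toDual_self_pos e hAu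
    rw [← hg] at this
    linarith
  have hrP : Module.finrank ℝ (LinearMap.range LP) = 2 * m := by
    rw [hLP, graph_finrank, hdim]
  have hrN : Module.finrank ℝ (LinearMap.range LN) = 2 * m := by
    rw [hLN, graph_finrank, hdim]
  have finE : Module.finrank ℝ (V × Module.Dual ℝ V) = 4 * m := by
    rw [Module.finrank_prod, Subspace.dual_finrank_eq, hdim]
    ring
  refine ⟨hsymm, ⟨⟨⟨_, hrP, hPpos⟩, ?_⟩, ⟨⟨_, hrN, hNneg⟩, ?_⟩⟩⟩
  · -- any positive definite subspace has finrank ≤ 2m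
    intro P' hP'
    have hint : P' ⊓ LinearMap.range LN = ⊥ := by
      rw [Submodule.eq_bot_iff]
      rintro x ⟨hx1, hx2⟩
      by_contra hxne
      have h1 := hP' x hx1 hxne
      have h2 := hNneg x hx2 hxne
      linarith
    have hsum := Submodule.finrank_sup_add_finrank_inf_eq P' (LinearMap.range LN)
    rw [hint, finrank_bot, hrN] at hsum
    have hle : Module.finrank ℝ ↥(P' ⊔ LinearMap.range LN) ≤ 4 * m := by
      rw [← finE]; exact Submodule.finrank_le _
    omega
  · intro N' hN'
    have hint : N' ⊓ LinearMap.range LP = ⊥ := by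
      rw [Submodule.eq_bot_iff]
      rintro x ⟨hx1, hx2⟩
      by_contra hxne
      have h1 := hN' x hx1 hxne
      have h2 := hPpos x hx2 hxne
      linarith
    have hsum := Submodule.finrank_sup_add_finrank_inf_eq N' (LinearMap.range LP)
    rw [hint, finrank_bot, hrP] at hsum
    have hle : Module.finrank ℝ ↥(N' ⊔ LinearMap.range LP) ≤ 4 * m := by
      rw [← finE]; exact Submodule.finrank_le _
    omega
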